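/- For every S-tree 𝓣, m(𝓣) = n(𝓣); that is, Σ_{𝓤 ⊆ 𝓣} ∏_{T ∈ 𝓤} (m(𝓤, T) − 1) = ∏_{T ∈ 𝓣} n(𝓣, T), where the summand for 𝓤 = ∅ is 1 (empty product). -/

import Mathlib

variable {α : Type*} [DecidableEq α]

/-- The set of elements of `L` that are maximal in `L` under `T`. -/
def maxUnder (L : Finset (Finset α)) (T : Finset α) : Finset (Finset α) :=
  L.filter fun U => U ⊂ T ∧ ∀ V ∈ L, ¬ (U ⊂ V ∧ V ⊂ T)

/-- A forest on `S`. -/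
def IsForest (S : Finset α) (F : Finset (Finset α)) : Prop :=
  (∀ T ∈ F, T ⊆ S) ∧ (∀ T ∈ F, 2 ≤ T.card) ∧
    ∀ U ∈ F, ∀ T ∈ F, U ⊆ T ∨ T ⊆ U ∨ U ∩ T = ∅

/-- `m(F, T) = (|T| - 1) - Σ_{U ∈ M(F,T)} (|U| - 1)`. -/
def mNum (F : Finset (Finset α)) (T : Finset α) : ℤ :=
  ((T.card : ℤ) - 1) - ∑ U ∈ maxUnder F T, ((U.card : ℤ) - 1)

/-- `n(F, T) = (|T| - 1) - Σ_{U ∈ M(F,T)} (|U| - 2)`. -/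
def nNum (F : Finset (Finset α)) (T : Finset α) : ℤ :=
  ((T.card : ℤ) - 1) - ∑ U ∈ maxUnder F T, ((U.card : ℤ) - 2)

/-! ### Auxiliary definitions -/

/-- A nested family: all members have at least two elements and any two members are
nested or disjoint. -/
def Nested (F : Finset (Finset α)) : Prop :=
  (∀ T ∈ F, 2 ≤ T.card) ∧ ∀ U ∈ F, ∀ T ∈ F, U ⊆ T ∨ T ⊆ U ∨ U ∩ T = ∅

/-- The weight of a subforest. -/
def WW (U : Finset (Finset α)) : ℤ := ∏ T ∈ U, (mNum U T - 1)

/-- The total weighted sum over subforests. -/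
def Phi (F : Finset (Finset α)) : ℤ := ∑ U ∈ F.powerset, WW U

/-- `Σ_{V ∈ M(U,R)} (|V| - 1)`. -/
def cW (R : Finset α) (U : Finset (Finset α)) : ℤ :=
  ∑ V ∈ maxUnder U R, ((V.card : ℤ) - 1)

/-- `Σ_{V ∈ M(F,R)} (|V| - 2)`. -/
def eW (R : Finset α) (F : Finset (Finset α)) : ℤ :=
  ∑ V ∈ maxUnder F R, ((V.card : ℤ) - 2)

lemma Nested.subset {F G : Finset (Finset α)} (hG : G ⊆ F) (hF : Nested F) : Nested G :=
  ⟨fun T hT => hF.1 T (hG hT), fun U hU T hT => hF.2 U (hG hU) T (hG hT)⟩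

lemma Nested.nonempty_mem {F : Finset (Finset α)} (hF : Nested F) {T : Finset α}
    (hT : T ∈ F) : T.Nonempty := by
  have := hF.1 T hT
  rw [← Finset.card_pos]; omega

lemma not_ssubset_of_inter_empty {U T : Finset α} (hU : U.Nonempty) (h : U ∩ T = ∅) :
    ¬ U ⊂ T := by
  intro hsub
  have : U ∩ T = U := Finset.inter_eq_left.mpr hsub.subset
  rw [h] at this
  exact hU.ne_empty this.symm

/-- Inserting a set `R` that is not strictly below `T` does not change `M(·, T)`. -/
lemma maxUnder_insert {L : Finset (Finset α)} {R T : Finset α} (h : ¬ R ⊂ T) :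
    maxUnder (insert R L) T = maxUnder L T := by
  ext U
  simp only [maxUnder, Finset.mem_filter, Finset.mem_insert]
  constructor
  · rintro ⟨hU | hU, hsub, hmax⟩
    · exact absurd hsub (hU ▸ h)
    · exact ⟨hU, hsub, fun V hV => hmax V (Or.inr hV)⟩
  · rintro ⟨hU, hsub, hmax⟩
    refine ⟨Or.inr hU, hsub, ?_⟩
    rintro V (rfl | hV)
    · exact fun hc => h hc.2
    · exact hmax V hV

/-- Adjoining sets that are not strictly below `T` does not change `M(·, T)`. -/
lemma maxUnder_union {L1 L2 : Finset (Finset α)} {T : Finset α}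
    (h : ∀ V ∈ L2, ¬ V ⊂ T) :
    maxUnder (L1 ∪ L2) T = maxUnder L1 T := by
  ext U
  simp only [maxUnder, Finset.mem_filter, Finset.mem_union]
  constructor
  · rintro ⟨hU | hU, hsub, hmax⟩
    · exact ⟨hU, hsub, fun V hV => hmax V (Or.inl hV)⟩
    · exact absurd hsub (h U hU)
  · rintro ⟨hU, hsub, hmax⟩
    refine ⟨Or.inl hU, hsub, ?_⟩
    rintro V (hV | hV)
    · exact hmax V hV
    · exact fun hc => h V hV hc.2

/-- If all members of `L` are strictly below `R1 ⊆ R`, then `M(L, R) = M(L, R1)`. -/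
lemma maxUnder_of_all_ssub {L : Finset (Finset α)} {R1 R : Finset α}
    (h1 : ∀ U ∈ L, U ⊂ R1) (h2 : R1 ⊆ R) :
    maxUnder L R = maxUnder L R1 := by
  unfold maxUnder
  apply Finset.filter_congr
  intro U hU
  have hUR1 := h1 U hU
  have hUR : U ⊂ R := hUR1.trans_subset h2
  constructor
  · rintro ⟨-, hmax⟩
    exact ⟨hUR1, fun V hV hc => hmax V hV ⟨hc.1, (h1 V hV).trans_subset h2⟩⟩
  · rintro ⟨-, hmax⟩
    exact ⟨hUR, fun V hV hc => hmax V hV ⟨hc.1, h1 V hV⟩⟩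

/-- If all of `L` is strictly below `R1` and `R1 ⊂ R`, then `M(insert R1 L, R) = {R1}`. -/
lemma maxUnder_insert_top {L : Finset (Finset α)} {R1 R : Finset α}
    (h1 : ∀ U ∈ L, U ⊂ R1) (h2 : R1 ⊂ R) :
    maxUnder (insert R1 L) R = {R1} := by
  ext U
  simp only [maxUnder, Finset.mem_filter, Finset.mem_insert, Finset.mem_singleton]
  constructor
  · rintro ⟨hU | hU, hsub, hmax⟩
    · exact hU
    · exact absurd ⟨h1 U hU, h2⟩ (hmax R1 (Or.inl rfl))
  · rintro rfl
    refine ⟨Or.inl rfl, h2, ?_⟩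
    rintro V (rfl | hV) hc
    · exact (ssubset_irrefl V) hc.1
    · exact (ssubset_asymm (h1 V hV)) hc.1

lemma maxUnder_eq_empty {L : Finset (Finset α)} {R : Finset α}
    (h : ∀ U ∈ L, ¬ U ⊂ R) : maxUnder L R = ∅ := by
  apply Finset.filter_false_of_mem
  intro U hU hc
  exact h U hU hc.1

lemma mNum_insert {L : Finset (Finset α)} {R T : Finset α} (h : ¬ R ⊂ T) :
    mNum (insert R L) T = mNum L T := by
  unfold mNum; rw [maxUnder_insert h]

lemma nNum_insert {L : Finset (Finset α)} {R T : Finset α} (h : ¬ R ⊂ T) :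
    nNum (insert R L) T = nNum L T := by
  unfold nNum; rw [maxUnder_insert h]

lemma mNum_insert_self (R : Finset α) (U : Finset (Finset α)) :
    mNum (insert R U) R = ((R.card : ℤ) - 1) - cW R U := by
  unfold mNum cW
  rw [maxUnder_insert (ssubset_irrefl R)]

lemma nNum_insert_self (R : Finset α) (U : Finset (Finset α)) :
    nNum (insert R U) R = ((R.card : ℤ) - 1) - eW R U := by
  unfold nNum eW
  rw [maxUnder_insert (ssubset_irrefl R)]

lemma WW_insert {R : Finset α} {U : Finset (Finset α)} (hR : R ∉ U)
    (h : ∀ T ∈ U, ¬ R ⊂ T) :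
    WW (insert R U) = (((R.card : ℤ) - 1) - cW R U - 1) * WW U := by
  unfold WW
  rw [Finset.prod_insert hR, mNum_insert_self]
  congr 1
  exact Finset.prod_congr rfl fun T hT => by rw [mNum_insert (h T hT)]

lemma cW_insert {R1 R : Finset α} {U : Finset (Finset α)} (h : ¬ R1 ⊂ R) :
    cW R (insert R1 U) = cW R U := by
  unfold cW; rw [maxUnder_insert h]

/-- Summation over the powerset of a disjoint union. -/
lemma sum_powerset_union {β : Type*} [DecidableEq β] (F1 : Finset β) :
    ∀ F2 : Finset β, Disjoint F1 F2 → ∀ f : Finset β → ℤ,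
      ∑ U ∈ (F1 ∪ F2).powerset, f U = ∑ A ∈ F1.powerset, ∑ B ∈ F2.powerset, f (A ∪ B) := by
  intro F2
  induction F2 using Finset.induction_on with
  | empty =>
    intro _ f
    simp
  | insert Q F2' hQ ih =>
    intro hdisj f
    have hQ1 : Q ∉ F1 := fun hc => (Finset.disjoint_left.mp hdisj hc) (Finset.mem_insert_self Q F2')
    have hd' : Disjoint F1 F2' := hdisj.mono_right (Finset.subset_insert Q F2')
    have hQ12 : Q ∉ F1 ∪ F2' := by
      simp only [Finset.mem_union, not_or]; exact ⟨hQ1, hQ⟩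
    rw [Finset.union_insert, Finset.sum_powerset_insert hQ12, ih hd' f,
      ih hd' (fun U => f (insert Q U)), ← Finset.sum_add_distrib]
    apply Finset.sum_congr rfl
    intro A hA
    rw [Finset.sum_powerset_insert hQ]
    congr 1
    exact Finset.sum_congr rfl fun B _ => by rw [Finset.union_insert]

section CrossDisjoint

variable {A B : Finset (Finset α)}

variable (hAne : ∀ U ∈ A, (U : Finset α).Nonempty) (hBne : ∀ V ∈ B, (V : Finset α).Nonempty)
  (hcross : ∀ U ∈ A, ∀ V ∈ B, U ∩ V = ∅)

include hAne hBne hcross in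
lemma maxUnder_union_split (R : Finset α) :
    maxUnder (A ∪ B) R = maxUnder A R ∪ maxUnder B R := by
  have hnAB : ∀ U ∈ A, ∀ V ∈ B, ¬ U ⊂ V := by
    intro U hU V hV
    exact not_ssubset_of_inter_empty (hAne U hU) (hcross U hU V hV)
  have hnBA : ∀ V ∈ B, ∀ U ∈ A, ¬ V ⊂ U := by
    intro V hV U hU
    apply not_ssubset_of_inter_empty (hBne V hV)
    rw [Finset.inter_comm]; exact hcross U hU V hV
  ext U
  simp only [maxUnder, Finset.mem_filter, Finset.mem_union]
  constructor
  · rintro ⟨hU | hU, hsub, hmax⟩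
    · exact Or.inl ⟨hU, hsub, fun V hV => hmax V (Or.inl hV)⟩
    · exact Or.inr ⟨hU, hsub, fun V hV => hmax V (Or.inr hV)⟩
  · rintro (⟨hU, hsub, hmax⟩ | ⟨hU, hsub, hmax⟩)
    · refine ⟨Or.inl hU, hsub, ?_⟩
      rintro V (hV | hV)
      · exact hmax V hV
      · exact fun hc => hnAB U hU V hV hc.1
    · refine ⟨Or.inr hU, hsub, ?_⟩
      rintro V (hV | hV)
      · exact fun hc => hnBA U hU V hV hc.1
      · exact hmax V hV

include hAne hBne hcross in
lemma WW_union (hd : Disjoint A B) : WW (A ∪ B) = WW A * WW B := by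
  have hnAB : ∀ U ∈ A, ∀ V ∈ B, ¬ U ⊂ V := by
    intro U hU V hV
    exact not_ssubset_of_inter_empty (hAne U hU) (hcross U hU V hV)
  have hnBA : ∀ V ∈ B, ∀ U ∈ A, ¬ V ⊂ U := by
    intro V hV U hU
    apply not_ssubset_of_inter_empty (hBne V hV)
    rw [Finset.inter_comm]; exact hcross U hU V hV
  unfold WW
  rw [Finset.prod_union hd]
  congr 1
  · apply Finset.prod_congr rfl
    intro T hT
    unfold mNum
    rw [maxUnder_union (fun V hV => hnBA V hV T hT)]
  · apply Finset.prod_congr rfl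
    intro T hT
    unfold mNum
    rw [Finset.union_comm, maxUnder_union (fun V hV => hnAB V hV T hT)]

include hAne hBne hcross in
lemma cW_union (hd : Disjoint A B) (R : Finset α) :
    cW R (A ∪ B) = cW R A + cW R B := by
  unfold cW
  rw [maxUnder_union_split hAne hBne hcross R, Finset.sum_union]
  exact hd.mono (Finset.filter_subset _ _) (Finset.filter_subset _ _)

include hAne hBne hcross in
lemma eW_union (hd : Disjoint A B) (R : Finset α) :
    eW R (A ∪ B) = eW R A + eW R B := by
  unfold eW
  rw [maxUnder_union_split hAne hBne hcross R, Finset.sum_union]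
  exact hd.mono (Finset.filter_subset _ _) (Finset.filter_subset _ _)

end CrossDisjoint

/-- Statement (B): the weighted sum of `cW R` equals `eW R F * Phi F`. -/
lemma lemB : ∀ n : ℕ, ∀ F : Finset (Finset α), ∀ R : Finset α, F.card = n → Nested F →
    (∀ T ∈ F, T ⊂ R ∨ T ∩ R = ∅) →
    (∑ U ∈ F.powerset, WW U * cW R U) = eW R F * Phi F := by
  intro n
  induction n using Nat.strong_induction_on with
  | _ n ih =>
    intro F R hcard hN hcompat
    rcases Finset.eq_empty_or_nonempty F with rfl | hne
    · simp [WW, cW, eW, Phi, maxUnder]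
    obtain ⟨R1, hR1F, hmax⟩ := Finset.exists_max_image F (fun T => T.card) hne
    -- every member is below R1 or disjoint from it
    have hbelow : ∀ T ∈ F, T ⊆ R1 ∨ T ∩ R1 = ∅ := by
      intro T hT
      rcases hN.2 T hT R1 hR1F with h | h | h
      · exact Or.inl h
      · exact Or.inl (Finset.eq_of_subset_of_card_le h (hmax T hT)).ge
      · exact Or.inr h
    by_cases hall : ∀ T ∈ F, T ⊆ R1
    · -- tree case: all of F sits inside R1
      set F'' := F.erase R1 with hF''
      have hR1notin : R1 ∉ F'' := Finset.notMem_erase R1 F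
      have hFeq : F = insert R1 F'' := (Finset.insert_erase hR1F).symm
      have hssub : ∀ T ∈ F'', T ⊂ R1 := by
        intro T hT
        exact Finset.ssubset_iff_subset_ne.mpr
          ⟨hall T (Finset.mem_of_mem_erase hT), Finset.ne_of_mem_erase hT⟩
      have hN'' : Nested F'' := hN.subset (Finset.erase_subset R1 F)
      rcases hcompat R1 hR1F with hR1R | hR1R
      · -- R1 ⊂ R
        have hcard'' : F''.card = n - 1 := by
          rw [hF'', Finset.card_erase_of_mem hR1F, hcard]
        have hlt : n - 1 < n := by
          have : 0 < n := by rw [← hcard]; exact Finset.card_pos.mpr hne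
          omega
        -- pointwise facts for U' ⊆ F''
        have key : ∀ U' ∈ F''.powerset,
            WW U' * cW R U' + WW (insert R1 U') * cW R (insert R1 U')
              = WW U' * cW R1 U'
                + (((R1.card : ℤ) - 2) - cW R1 U') * WW U' * ((R1.card : ℤ) - 1) := by
          intro U' hU'
          rw [Finset.mem_powerset] at hU'
          have hssubU : ∀ T ∈ U', T ⊂ R1 := fun T hT => hssub T (hU' hT)
          have hR1nU : R1 ∉ U' := fun hc => (ssubset_irrefl R1) (hssubU R1 hc)
          have h1 : cW R U' = cW R1 U' := by
            unfold cW; rw [maxUnder_of_all_ssub hssubU hR1R.subset]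
          have h2 : cW R (insert R1 U') = (R1.card : ℤ) - 1 := by
            unfold cW; rw [maxUnder_insert_top hssubU hR1R, Finset.sum_singleton]
          have h3 : WW (insert R1 U') = (((R1.card : ℤ) - 1) - cW R1 U' - 1) * WW U' := by
            apply WW_insert hR1nU
            intro T hT
            exact ssubset_asymm (hssubU T hT)
          rw [h1, h2, h3]; ring
        have hsum : (∑ U ∈ F.powerset, WW U * cW R U)
            = ∑ U' ∈ F''.powerset, (WW U' * cW R U'
                + WW (insert R1 U') * cW R (insert R1 U')) := by
          rw [hFeq, Finset.sum_powerset_insert hR1notin, ← Finset.sum_add_distrib]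
        -- Phi F in terms of F''
        have hPhikey : ∀ U' ∈ F''.powerset,
            WW U' + WW (insert R1 U')
              = WW U' * (((R1.card : ℤ) - 1) - cW R1 U') := by
          intro U' hU'
          rw [Finset.mem_powerset] at hU'
          have hssubU : ∀ T ∈ U', T ⊂ R1 := fun T hT => hssub T (hU' hT)
          have hR1nU : R1 ∉ U' := fun hc => (ssubset_irrefl R1) (hssubU R1 hc)
          rw [WW_insert hR1nU (fun T hT => ssubset_asymm (hssubU T hT))]
          ring
        have hPhi : Phi F = ((R1.card : ℤ) - 1) * Phi F''
            - ∑ U' ∈ F''.powerset, WW U' * cW R1 U' := by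
          unfold Phi
          rw [hFeq, Finset.sum_powerset_insert hR1notin, ← Finset.sum_add_distrib,
            Finset.sum_congr rfl hPhikey]
          rw [Finset.mul_sum, ← Finset.sum_sub_distrib]
          apply Finset.sum_congr rfl
          intro U' _
          ring
        have heR : eW R F = (R1.card : ℤ) - 2 := by
          unfold eW
          rw [hFeq, maxUnder_insert_top hssub hR1R, Finset.sum_singleton]
        -- the inner sum computed via IH
        have hSc : (∑ U' ∈ F''.powerset, WW U' * cW R1 U')
            = eW R1 F'' * Phi F'' := by
          apply ih (n-1) hlt F'' R1 hcard'' hN''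
          intro T hT
          exact Or.inl (hssub T hT)
        rw [hsum, Finset.sum_congr rfl key, Finset.sum_add_distrib, hPhi, heR]
        rw [Finset.sum_congr rfl
          (fun U' _ => by ring :
            ∀ U' ∈ F''.powerset, (((R1.card : ℤ) - 2) - cW R1 U') * WW U' * ((R1.card : ℤ) - 1)
              = (((R1.card : ℤ) - 2) * ((R1.card : ℤ) - 1)) * WW U'
                - ((R1.card : ℤ) - 1) * (WW U' * cW R1 U')),
          Finset.sum_sub_distrib, ← Finset.mul_sum, ← Finset.mul_sum, hSc]
        show eW R1 F'' * Phi F''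
            + ((((R1.card : ℤ) - 2) * ((R1.card : ℤ) - 1)) * Phi F''
              - ((R1.card : ℤ) - 1) * (eW R1 F'' * Phi F''))
          = ((R1.card : ℤ) - 2) * (((R1.card : ℤ) - 1) * Phi F'' - eW R1 F'' * Phi F'')
        ring
      · -- R1 ∩ R = ∅  : everything is disjoint from R, both sides vanish
        have hnosub : ∀ T ∈ F, ¬ T ⊂ R := by
          intro T hT hc
          have hTR1 : T ⊆ R1 := hall T hT
          have : T ⊆ R1 ∩ R := Finset.subset_inter hTR1 hc.subset
          rw [hR1R] at this
          exact (hN.nonempty_mem hT).ne_empty (Finset.subset_empty.mp this)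
        have hcWzero : ∀ U ∈ F.powerset, WW U * cW R U = 0 := by
          intro U hU
          rw [Finset.mem_powerset] at hU
          have : cW R U = 0 := by
            unfold cW
            rw [maxUnder_eq_empty (fun T hT => hnosub T (hU hT)), Finset.sum_empty]
          rw [this, mul_zero]
        have heR : eW R F = 0 := by
          unfold eW
          rw [maxUnder_eq_empty hnosub, Finset.sum_empty]
        rw [Finset.sum_congr rfl hcWzero, Finset.sum_const, heR, zero_mul, smul_zero]
    · -- forest case: split off the component of R1
      push_neg at hall
      obtain ⟨T2, hT2F, hT2⟩ := hall
      set F1 := F.filter (fun T => T ⊆ R1) with hF1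
      set F2 := F.filter (fun T => ¬ T ⊆ R1) with hF2
      have hF1sub : F1 ⊆ F := Finset.filter_subset _ _
      have hF2sub : F2 ⊆ F := Finset.filter_subset _ _
      have hunion : F1 ∪ F2 = F := Finset.filter_union_filter_not_eq _ F
      have hdisj : Disjoint F1 F2 := Finset.disjoint_filter_filter_not F F _
      have hR1F1 : R1 ∈ F1 := Finset.mem_filter.mpr ⟨hR1F, Finset.Subset.refl R1⟩
      have hT2F2 : T2 ∈ F2 := Finset.mem_filter.mpr ⟨hT2F, hT2⟩
      have hcross : ∀ U ∈ F1, ∀ V ∈ F2, U ∩ V = ∅ := by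
        intro U hU V hV
        rw [hF1, Finset.mem_filter] at hU
        rw [hF2, Finset.mem_filter] at hV
        have hVR1 : V ∩ R1 = ∅ := by
          rcases hbelow V hV.1 with h | h
          · exact absurd h hV.2
          · exact h
        rcases hN.2 U (hU.1) V (hV.1) with h | h | h
        · -- U ⊆ V : then U ⊆ V ∩ R1 = ∅, contradiction
          exfalso
          have : U ⊆ V ∩ R1 := Finset.subset_inter h hU.2
          rw [hVR1] at this
          exact (hN.nonempty_mem hU.1).ne_empty (Finset.subset_empty.mp this)
        · -- V ⊆ U ⊆ R1 : contradiction
          exact absurd (h.trans hU.2) hV.2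
        · exact h
      have hNe1 : ∀ U ∈ F1, (U : Finset α).Nonempty := fun U hU => hN.nonempty_mem (hF1sub hU)
      have hNe2 : ∀ V ∈ F2, (V : Finset α).Nonempty := fun V hV => hN.nonempty_mem (hF2sub hV)
      have hN1 : Nested F1 := hN.subset hF1sub
      have hN2 : Nested F2 := hN.subset hF2sub
      have hc1compat : ∀ T ∈ F1, T ⊂ R ∨ T ∩ R = ∅ := fun T hT => hcompat T (hF1sub hT)
      have hc2compat : ∀ T ∈ F2, T ⊂ R ∨ T ∩ R = ∅ := fun T hT => hcompat T (hF2sub hT)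
      have hcard1 : F1.card < n := by
        rw [← hcard]
        apply Finset.card_lt_card
        exact Finset.ssubset_iff_of_subset hF1sub |>.mpr
          ⟨T2, hT2F, fun hc => hT2 (Finset.mem_filter.mp hc).2⟩
      have hcard2 : F2.card < n := by
        rw [← hcard]
        apply Finset.card_lt_card
        refine Finset.ssubset_iff_of_subset hF2sub |>.mpr ⟨R1, hR1F, ?_⟩
        intro hc
        exact (Finset.mem_filter.mp hc).2 (Finset.Subset.refl R1)
      -- the pointwise facts for A ⊆ F1, B ⊆ F2
      have hptW : ∀ A ∈ F1.powerset, ∀ B ∈ F2.powerset,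
          WW (A ∪ B) * cW R (A ∪ B)
            = (WW A * cW R A) * WW B + WW A * (WW B * cW R B) := by
        intro A hA B hB
        rw [Finset.mem_powerset] at hA hB
        have hAne : ∀ U ∈ A, (U : Finset α).Nonempty := fun U hU => hNe1 U (hA hU)
        have hBne : ∀ V ∈ B, (V : Finset α).Nonempty := fun V hV => hNe2 V (hB hV)
        have hcr : ∀ U ∈ A, ∀ V ∈ B, U ∩ V = ∅ := fun U hU V hV => hcross U (hA hU) V (hB hV)
        have hd : Disjoint A B := hdisj.mono hA hB
        rw [WW_union hAne hBne hcr hd, cW_union hAne hBne hcr hd]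
        ring
      have hsum : (∑ U ∈ F.powerset, WW U * cW R U)
          = (∑ A ∈ F1.powerset, WW A * cW R A) * (∑ B ∈ F2.powerset, WW B)
            + (∑ A ∈ F1.powerset, WW A) * (∑ B ∈ F2.powerset, WW B * cW R B) := by
        rw [← hunion, sum_powerset_union F1 F2 hdisj]
        rw [Finset.sum_congr rfl (fun A hA => Finset.sum_congr rfl (hptW A hA))]
        rw [Finset.sum_congr rfl (fun A _ => Finset.sum_add_distrib), Finset.sum_add_distrib,
          Finset.sum_mul_sum, Finset.sum_mul_sum]
      have hPhi : Phi F = Phi F1 * Phi F2 := by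
        unfold Phi
        rw [← hunion, sum_powerset_union F1 F2 hdisj, Finset.sum_mul_sum]
        apply Finset.sum_congr rfl
        intro A hA
        apply Finset.sum_congr rfl
        intro B hB
        rw [Finset.mem_powerset] at hA hB
        exact WW_union (fun U hU => hNe1 U (hA hU)) (fun V hV => hNe2 V (hB hV))
          (fun U hU V hV => hcross U (hA hU) V (hB hV)) (hdisj.mono hA hB)
      have heW : eW R F = eW R F1 + eW R F2 := by
        rw [← hunion]
        exact eW_union hNe1 hNe2 hcross hdisj R
      rw [hsum, hPhi, heW,
        ih F1.card hcard1 F1 R rfl hN1 hc1compat,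
        ih F2.card hcard2 F2 R rfl hN2 hc2compat]
      show (eW R F1 * Phi F1) * Phi F2 + Phi F1 * (eW R F2 * Phi F2)
          = (eW R F1 + eW R F2) * (Phi F1 * Phi F2)
      ring

/-- Statement (A): `Phi F = ∏ n(F, T)` for every nested family. -/
lemma lemA : ∀ n : ℕ, ∀ F : Finset (Finset α), F.card = n → Nested F →
    Phi F = ∏ T ∈ F, nNum F T := by
  intro n
  induction n using Nat.strong_induction_on with
  | _ n ih =>
    intro F hcard hN
    rcases Finset.eq_empty_or_nonempty F with rfl | hne
    · simp [Phi, WW]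
    obtain ⟨R, hRF, hmax⟩ := Finset.exists_max_image F (fun T => T.card) hne
    set F' := F.erase R with hF'
    have hRnotin : R ∉ F' := Finset.notMem_erase R F
    have hFeq : F = insert R F' := (Finset.insert_erase hRF).symm
    have hN' : Nested F' := hN.subset (Finset.erase_subset R F)
    have hcard' : F'.card = n - 1 := by
      rw [hF', Finset.card_erase_of_mem hRF, hcard]
    have hlt : n - 1 < n := by
      have : 0 < n := by rw [← hcard]; exact Finset.card_pos.mpr hne
      omega
    have hnotRsub : ∀ T ∈ F', ¬ R ⊂ T := by
      intro T hT hc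
      have := Finset.card_lt_card hc
      have := hmax T (Finset.mem_of_mem_erase hT)
      omega
    have hcompat : ∀ T ∈ F', T ⊂ R ∨ T ∩ R = ∅ := by
      intro T hT
      have hTF := Finset.mem_of_mem_erase hT
      rcases hN.2 T hTF R hRF with h | h | h
      · exact Or.inl (Finset.ssubset_iff_subset_ne.mpr ⟨h, Finset.ne_of_mem_erase hT⟩)
      · exact Or.inl (Finset.ssubset_iff_subset_ne.mpr
          ⟨(Finset.eq_of_subset_of_card_le h (hmax T hTF)).ge,
            Finset.ne_of_mem_erase hT⟩)
      · exact Or.inr h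
    -- LHS
    have hkey : ∀ U' ∈ F'.powerset,
        WW U' + WW (insert R U') = WW U' * (((R.card : ℤ) - 1) - cW R U') := by
      intro U' hU'
      rw [Finset.mem_powerset] at hU'
      have hRnU : R ∉ U' := fun hc => hRnotin (hU' hc)
      rw [WW_insert hRnU (fun T hT => hnotRsub T (hU' hT))]
      ring
    have hPhi : Phi F = ((R.card : ℤ) - 1) * Phi F'
        - ∑ U' ∈ F'.powerset, WW U' * cW R U' := by
      unfold Phi
      rw [hFeq, Finset.sum_powerset_insert hRnotin, ← Finset.sum_add_distrib,
        Finset.sum_congr rfl hkey]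
      rw [Finset.mul_sum, ← Finset.sum_sub_distrib]
      apply Finset.sum_congr rfl
      intro U' _
      ring
    have hB := lemB (n-1) F' R hcard' hN' hcompat
    -- RHS
    have hnR : nNum F R = ((R.card : ℤ) - 1) - eW R F' := by
      rw [hFeq, nNum_insert_self]
    have hRHS : (∏ T ∈ F, nNum F T)
        = (((R.card : ℤ) - 1) - eW R F') * ∏ T ∈ F', nNum F' T := by
      rw [hFeq, Finset.prod_insert hRnotin, ← hFeq, hnR]
      congr 1
      apply Finset.prod_congr rfl
      intro T hT
      rw [hFeq, nNum_insert (hnotRsub T hT)]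
    rw [hPhi, hB, hRHS, ← ih (n-1) hlt F' hcard' hN']
    ring

/-- For every `S`-tree `𝓣`, `m(𝓣) = n(𝓣)`:
`Σ_{𝓤 ⊆ 𝓣} ∏_{T ∈ 𝓤} (m(𝓤, T) − 1) = ∏_{T ∈ 𝓣} n(𝓣, T)`. -/
theorem stmt5 (S : Finset α) (Tr : Finset (Finset α))
    (hTr : IsForest S Tr) (hS : S ∈ Tr) :
    ∑ Us ∈ Tr.powerset, ∏ T ∈ Us, (mNum Us T - 1) = ∏ T ∈ Tr, nNum Tr T := by
  have hN : Nested Tr := ⟨hTr.2.1, hTr.2.2⟩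
  have := lemA Tr.card Tr rfl hN
  unfold Phi WW at this
  exact this
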